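/- Let X = (X₁,…,X_d) be a strict row contraction of n×n complex matrices, set Δ_X = I_n − Σᵢ₌₁^d XᵢXᵢ*, and define 𝒱_X = (P_X^{1/2} ⊗ I_n ⊗ Δ_X^{1/2})·B̆_n ∈ M_{n⁴×n²}(ℂ), where B̆_n is the ampliated boomerang matrix with r = n. Then 𝒱_X is an isometry: 𝒱_X*·𝒱_X = I_{n²}. -/

import Mathlib

/-!
Common definitions: the ψ-involution, `vec`, the elementary Pick matrix, the Choi matrix,
Kronecker-product helpers with right-associated index types, the boomerang matrices, the
commutation matrix, and the Moore–Penrose predicate.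
-/

open Matrix Filter
open scoped Kronecker Matrix.Norms.L2Operator ComplexOrder

noncomputable section

/-- Square `n × n` complex matrices. -/
abbrev Mat (n : ℕ) := Matrix (Fin n) (Fin n) ℂ

/-- Entrywise complex conjugate of a matrix. -/
def conjM {m k : Type*} (A : Matrix m k ℂ) : Matrix m k ℂ := A.map (starRingEnd ℂ)

/-- `vec A` stacks the columns of `A`: the slot `(j, i)` (column `j`, row `i`) holds `A i j`. -/
def vecM (n : ℕ) (A : Mat n) : Matrix (Fin n × Fin n) Unit ℂ := Matrix.of fun p _ => A p.2 p.1

/-- The `ψ`-involution on `M_{n²}(ℂ)`: the linear map determined on matrix units by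
`ψ(E_{ij} ⊗ E_{kℓ}) = E_{ℓj} ⊗ E_{ki}`, equivalently `ψ(A ⊗ B) = vec(B)·vec(A)ᵀ`. -/
def psi (n : ℕ) (U : Matrix (Fin n × Fin n) (Fin n × Fin n) ℂ) :
    Matrix (Fin n × Fin n) (Fin n × Fin n) ℂ :=
  Matrix.of fun p q => U (q.2, p.2) (q.1, p.1)

/-- `X` is a strict row contraction: `‖Σᵢ Xᵢ Xᵢ*‖ < 1` in the L² operator norm. -/
def StrictRowContraction {n : ℕ} {ι : Type*} [Fintype ι] (X : ι → Mat n) : Prop :=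
  ‖∑ i, X i * (X i)ᴴ‖ < 1

/-- The elementary Pick matrix `P_X = ψ((I_{n²} − Σᵢ conj(Xᵢ) ⊗ Xᵢ)⁻¹)`. -/
def pick {n : ℕ} {ι : Type*} [Fintype ι] (X : ι → Mat n) :
    Matrix (Fin n × Fin n) (Fin n × Fin n) ℂ :=
  psi n ((1 - ∑ i, conjM (X i) ⊗ₖ X i)⁻¹)

/-- The Choi matrix `𝔠_n = Σ_{i,j} E_{ij} ⊗ E_{ij} ∈ M_{n²}(ℂ)`. -/
def choiM (n : ℕ) : Matrix (Fin n × Fin n) (Fin n × Fin n) ℂ :=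
  ∑ i : Fin n, ∑ j : Fin n, single i j (1 : ℂ) ⊗ₖ single i j (1 : ℂ)

/-- `X^w = X_{i₁} ⋯ X_{i_k}` for a word `w = i₁⋯i_k` in the free monoid. -/
def wordProd {n : ℕ} {ι : Type*} (X : ι → Mat n) (w : List ι) : Mat n := (w.map X).prod

/-- Kronecker product `A ⊗ C` where `A` carries a product index, with the resulting
index types flattened right-associatively (`(a × b) × c ↦ a × (b × c)`). -/
def krA {a b c a' b' c' : Type*} (A : Matrix (a × b) (a' × b') ℂ) (C : Matrix c c' ℂ) :
    Matrix (a × b × c) (a' × b' × c') ℂ :=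
  Matrix.of fun p q => A (p.1, p.2.1) (q.1, q.2.1) * C p.2.2 q.2.2

/-- Kronecker product `M ⊗ C` where `M` carries a triple product index, flattened
right-associatively. -/
def krT {a b c e a' b' c' e' : Type*} (M : Matrix (a × b × c) (a' × b' × c') ℂ)
    (C : Matrix e e' ℂ) : Matrix (a × b × c × e) (a' × b' × c' × e') ℂ :=
  Matrix.of fun p q => M (p.1, p.2.1, p.2.2.1) (q.1, q.2.1, q.2.2.1) * C p.2.2.2 q.2.2.2

/-- Triple Kronecker product `A ⊗ B ⊗ C` with right-associated index types. -/
def kr3 {a b c a' b' c' : Type*} (A : Matrix a a' ℂ) (B : Matrix b b' ℂ) (C : Matrix c c' ℂ) :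
    Matrix (a × b × c) (a' × b' × c') ℂ :=
  Matrix.of fun p q => A p.1 q.1 * B p.2.1 q.2.1 * C p.2.2 q.2.2

/-- The boomerang matrix `B̆ = Σ_{i,j} e_i ⊗ e_j ⊗ E_{ij} ∈ M_{n³×n}(ℂ)`:
its entry at row `(i, j, k)`, column `ℓ` is `δ_{k i} δ_{ℓ j}`. -/
def boom (n : ℕ) : Matrix (Fin n × Fin n × Fin n) (Fin n) ℂ :=
  Matrix.of fun p l => if p.2.2 = p.1 ∧ l = p.2.1 then 1 else 0

/-- The commutation (permutation) matrix `Q_{n,r}`, satisfying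
`Q_{n,r} (U ⊗ V) Q_{n,r}ᵀ = V ⊗ U` for `U ∈ M_n`, `V ∈ M_r`. -/
def commMat (n r : ℕ) : Matrix (Fin r × Fin n) (Fin n × Fin r) ℂ :=
  Matrix.of fun p q => if p.2 = q.1 ∧ p.1 = q.2 then 1 else 0

/-- `Σ_{i,j} e_i ⊗ e_j ⊗ I_r ⊗ E_{ij}`: its entry at row `(i, j, a, k)`, column `(b, ℓ)`
is `δ_{k i} δ_{ℓ j} δ_{a b}`. -/
def preBoom (n r : ℕ) : Matrix (Fin n × Fin n × Fin r × Fin n) (Fin r × Fin n) ℂ :=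
  Matrix.of fun p q => if p.2.2.2 = p.1 ∧ q.2 = p.2.1 ∧ p.2.2.1 = q.1 then 1 else 0

/-- The ampliated boomerang matrix `B̆_r = (Σ_{i,j} e_i ⊗ e_j ⊗ I_r ⊗ E_{ij}) · Q_{n,r}`. -/
def boomAmp (n r : ℕ) : Matrix (Fin n × Fin n × Fin r × Fin n) (Fin n × Fin r) ℂ :=
  preBoom n r * commMat n r

/-- The positive semidefinite square root (removed from Mathlib; restored with its old definition). -/
def Matrix.PosSemidef.sqrt {m : Type*} [Fintype m] [DecidableEq m] {𝕜 : Type*} [RCLike 𝕜]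
    {A : Matrix m m 𝕜} (hA : A.PosSemidef) : Matrix m m 𝕜 :=
  hA.1.eigenvectorUnitary.1 * diagonal ((↑) ∘ (√·) ∘ hA.1.eigenvalues) *
    (star hA.1.eigenvectorUnitary : Matrix m m 𝕜)

/-- `B` is the Moore–Penrose pseudoinverse of `A` (the four Penrose conditions). -/
structure IsMoorePenroseInv {m k : Type*} [Fintype m] [Fintype k]
    (A : Matrix m k ℂ) (B : Matrix k m ℂ) : Prop where
  mul_inv_mul : A * B * A = A
  inv_mul_inv : B * A * B = B
  hermitian_mul_inv : (A * B)ᴴ = A * B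
  hermitian_inv_mul : (B * A)ᴴ = B * A

-- norm of a matrix is at most the sum of the absolute values of its entries
lemma aux_norm_le_sum {m k : Type*} [Fintype m] [Fintype k] [DecidableEq m] [DecidableEq k]
    (M : Matrix m k ℂ) : ‖M‖ ≤ ∑ p : m, ∑ q : k, ‖M p q‖ := by
  have hE : ∀ (i : m) (j : k), ‖(single i j (1:ℂ) : Matrix m k ℂ)‖ ≤ 1 := by
    intro i j
    set E : Matrix m k ℂ := single i j (1:ℂ) with hEdef
    set F : Matrix k k ℂ := single j j (1:ℂ) with hFdef
    have hEF : Eᴴ * E = F := by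
      ext a b
      simp [hEdef, hFdef, mul_apply, Matrix.single, Matrix.conjTranspose_apply, ite_and,
        Finset.sum_ite_eq]
      aesop
    have hFF : F * F = F := by
      ext a b
      simp [hFdef, mul_apply, Matrix.single, ite_and, Finset.sum_ite_eq]
      aesop
    have hFH : Fᴴ = F := by
      ext a b
      simp [hFdef, Matrix.single]
      aesop
    have h1 := Matrix.l2_opNorm_conjTranspose_mul_self F
    rw [hFH, hFF] at h1
    have hFle : ‖F‖ ≤ 1 := by nlinarith [norm_nonneg F]
    have h2 : ‖E‖ * ‖E‖ = ‖F‖ := by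
      rw [← hEF, Matrix.l2_opNorm_conjTranspose_mul_self]
    nlinarith [norm_nonneg E]
  conv_lhs => rw [matrix_eq_sum_single M]
  refine (norm_sum_le _ _).trans (Finset.sum_le_sum fun i _ => ?_)
  refine (norm_sum_le _ _).trans (Finset.sum_le_sum fun j _ => ?_)
  have : single i j (M i j) = (M i j) • single i j (1:ℂ) := by
    rw [smul_single, smul_eq_mul, mul_one]
  rw [this, norm_smul]
  calc ‖M i j‖ * ‖single i j (1:ℂ)‖ ≤ ‖M i j‖ * 1 :=
        mul_le_mul_of_nonneg_left (hE i j) (norm_nonneg _)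
    _ = ‖M i j‖ := by rw [mul_one]


lemma aux_psd_smul {m : Type*} [Fintype m] {M : Matrix m m ℂ} (hM : M.PosSemidef)
    {r : ℝ} (hr : 0 ≤ r) : ((r : ℂ) • M).PosSemidef := by
  refine Matrix.PosSemidef.of_dotProduct_mulVec_nonneg ?_ ?_
  · unfold Matrix.IsHermitian
    rw [conjTranspose_smul, hM.1.eq, Complex.star_def, Complex.conj_ofReal]
  · intro x
    rw [smul_mulVec, dotProduct_smul, smul_eq_mul]
    exact mul_nonneg (by exact_mod_cast hr) (hM.dotProduct_mulVec_nonneg x)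

lemma aux_psd_norm_smul_one_sub {m : Type*} [Fintype m] [DecidableEq m] {R : Matrix m m ℂ}
    (hR : R.PosSemidef) : (((‖R‖ : ℝ) : ℂ) • (1 : Matrix m m ℂ) - R).PosSemidef := by
  refine Matrix.PosSemidef.of_dotProduct_mulVec_nonneg ?_ ?_
  · unfold Matrix.IsHermitian
    rw [conjTranspose_sub, conjTranspose_smul, conjTranspose_one, hR.1.eq, Complex.star_def,
      Complex.conj_ofReal]
  · intro x
    have hq := hR.dotProduct_mulVec_nonneg x
    set q : ℂ := star x ⬝ᵥ R *ᵥ x with hqdef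
    set y : EuclideanSpace ℂ m := (WithLp.equiv 2 _).symm x with hydef
    have hqy : q = inner ℂ y ((WithLp.equiv 2 _).symm (R *ᵥ x)) := by
      rw [hqdef, dotProduct_comm]; rfl
    have habs : ‖q‖ ≤ ‖R‖ * (‖y‖ * ‖y‖) := by
      rw [hqy]
      calc ‖(inner ℂ y ((WithLp.equiv 2 _).symm (R *ᵥ x)) : ℂ)‖
          ≤ ‖y‖ * ‖(WithLp.equiv 2 _).symm (R *ᵥ x)‖ := norm_inner_le_norm y _
        _ ≤ ‖y‖ * (‖R‖ * ‖y‖) := by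
            refine mul_le_mul_of_nonneg_left ?_ (norm_nonneg y)
            exact Matrix.l2_opNorm_mulVec R y
        _ = ‖R‖ * (‖y‖ * ‖y‖) := by ring
    have hxx : (star x ⬝ᵥ x) = ((‖y‖ : ℂ) * (‖y‖ : ℂ)) := by
      have : inner ℂ y y = star x ⬝ᵥ x := by rw [dotProduct_comm]; rfl
      rw [← this, inner_self_eq_norm_sq_to_K]
      norm_cast
      congr 1
      rw [pow_two]
      rfl
    have hcompute : star x ⬝ᵥ ((((‖R‖ : ℝ) : ℂ) • (1 : Matrix m m ℂ) - R) *ᵥ x)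
        = ((‖R‖ : ℝ) : ℂ) * (star x ⬝ᵥ x) - q := by
      rw [sub_mulVec, dotProduct_sub, smul_mulVec, one_mulVec, dotProduct_smul, smul_eq_mul]
    rw [hcompute, hxx]
    rw [Complex.nonneg_iff] at hq ⊢
    obtain ⟨hqre, hqim⟩ := hq
    constructor
    · simp only [Complex.sub_re, Complex.mul_re, Complex.ofReal_re, Complex.ofReal_im]
      have : q.re ≤ ‖q‖ := by simpa using RCLike.re_le_norm (K := ℂ) q
      push_cast
      nlinarith [habs]
    · simp only [Complex.sub_im, Complex.mul_im, Complex.ofReal_re, Complex.ofReal_im]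
      push_cast
      nlinarith

section AuxLemmas

lemma aux_conjM_mul {n : ℕ} (A B : Mat n) : conjM (A * B) = conjM A * conjM B :=
  Matrix.map_mul

lemma aux_conjM_one {n : ℕ} : conjM (1 : Mat n) = (1 : Mat n) :=
  Matrix.map_one _ (map_zero _) (map_one _)

lemma aux_wordProd_nil {n : ℕ} {ι : Type*} (X : ι → Mat n) : wordProd X [] = 1 := rfl

lemma aux_wordProd_cons {n : ℕ} {ι : Type*} (X : ι → Mat n) (a : ι) (l : List ι) :
    wordProd X (a :: l) = X a * wordProd X l := by
  unfold wordProd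
  simp

lemma aux_pow_expand {n d : ℕ} (X : Fin d → Mat n) (k : ℕ) :
    (∑ i, conjM (X i) ⊗ₖ X i) ^ k
      = ∑ w : Fin k → Fin d, conjM (wordProd X (List.ofFn w)) ⊗ₖ wordProd X (List.ofFn w) := by
  induction k with
  | zero =>
      rw [pow_zero, Fintype.sum_unique]
      simp [aux_wordProd_nil, aux_conjM_one, Matrix.one_kronecker_one]
  | succ k ih =>
      rw [pow_succ', ih, Finset.mul_sum]
      rw [← (Fin.consEquiv (fun _ => Fin d)).sum_comp
        (fun w => conjM (wordProd X (List.ofFn w)) ⊗ₖ wordProd X (List.ofFn w))]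
      rw [Fintype.sum_prod_type, Finset.sum_comm]
      refine Finset.sum_congr rfl fun w _ => ?_
      rw [Finset.sum_mul]
      refine Finset.sum_congr rfl fun i _ => ?_
      have hof : List.ofFn ((Fin.consEquiv (fun _ => Fin d)) (i, w)) = i :: List.ofFn w := by
        simp [Fin.consEquiv, List.ofFn_succ]
      rw [hof, aux_wordProd_cons, aux_conjM_mul, ← Matrix.mul_kronecker_mul]

lemma aux_words_psd {n d : ℕ} (X : Fin d → Mat n) {c : ℝ} (hc0 : 0 ≤ c)
    (hR : (((c : ℝ) : ℂ) • (1 : Mat n) - ∑ i, X i * (X i)ᴴ).PosSemidef) (k : ℕ) :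
    (((c ^ k : ℝ) : ℂ) • (1 : Mat n)
       - ∑ w : Fin k → Fin d, wordProd X (List.ofFn w) * (wordProd X (List.ofFn w))ᴴ).PosSemidef := by
  induction k with
  | zero =>
      have : (((c ^ 0 : ℝ) : ℂ) • (1 : Mat n)
          - ∑ w : Fin 0 → Fin d, wordProd X (List.ofFn w) * (wordProd X (List.ofFn w))ᴴ) = 0 := by
        rw [Fintype.sum_unique]
        simp [aux_wordProd_nil]
      rw [this]
      exact Matrix.PosSemidef.zero
  | succ k ih =>
      set G : Mat n := ∑ w : Fin k → Fin d, wordProd X (List.ofFn w) * (wordProd X (List.ofFn w))ᴴ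
        with hG
      have hrec : (∑ w : Fin (k+1) → Fin d,
          wordProd X (List.ofFn w) * (wordProd X (List.ofFn w))ᴴ) = ∑ i, X i * G * (X i)ᴴ := by
        rw [← (Fin.consEquiv (fun _ => Fin d)).sum_comp
          (fun w => wordProd X (List.ofFn w) * (wordProd X (List.ofFn w))ᴴ)]
        rw [Fintype.sum_prod_type]
        refine Finset.sum_congr rfl fun i _ => ?_
        rw [hG, Finset.mul_sum, Finset.sum_mul]
        refine Finset.sum_congr rfl fun w _ => ?_
        have hof : List.ofFn ((Fin.consEquiv (fun _ => Fin d)) (i, w)) = i :: List.ofFn w := by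
          simp [Fin.consEquiv, List.ofFn_succ]
        rw [hof, aux_wordProd_cons, Matrix.conjTranspose_mul]
        noncomm_ring
      have key : (((c ^ (k+1) : ℝ) : ℂ) • (1 : Mat n)
            - ∑ w : Fin (k+1) → Fin d, wordProd X (List.ofFn w) * (wordProd X (List.ofFn w))ᴴ)
          = ((c ^ k : ℝ) : ℂ) • ((((c : ℝ) : ℂ)) • (1 : Mat n) - ∑ i, X i * (X i)ᴴ)
            + ∑ i, X i * ((((c ^ k : ℝ) : ℂ)) • (1 : Mat n) - G) * (X i)ᴴ := by
        rw [hrec]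
        have expand : ∀ i, X i * ((((c ^ k : ℝ) : ℂ)) • (1 : Mat n) - G) * (X i)ᴴ
            = ((c ^ k : ℝ) : ℂ) • (X i * (X i)ᴴ) - X i * G * (X i)ᴴ := by
          intro i
          rw [Matrix.mul_sub, Matrix.sub_mul, Matrix.mul_smul, Matrix.mul_one, Matrix.smul_mul]
        rw [Finset.sum_congr rfl fun i _ => expand i, Finset.sum_sub_distrib, ← Finset.smul_sum]
        rw [smul_sub, smul_smul]
        push_cast
        ring_nf
        abel
      rw [key]
      refine (aux_psd_smul hR (pow_nonneg hc0 k)).add ?_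
      refine Finset.sum_induction _ _ (fun A B hA hB => hA.add hB) Matrix.PosSemidef.zero
        (fun i _ => ih.mul_mul_conjTranspose_same (X i))

end AuxLemmas

section AuxLemmas2

lemma aux_diag_nonneg {m : Type*} [Fintype m] [DecidableEq m] {M : Matrix m m ℂ}
    (hM : M.PosSemidef) (a : m) : 0 ≤ M a a := by
  have := hM.dotProduct_mulVec_nonneg (Pi.single a 1)
  simpa [Matrix.mulVec_single, dotProduct, Pi.single_apply, Finset.sum_ite_eq] using this

lemma aux_trace_bound {n d : ℕ} (X : Fin d → Mat n) {c : ℝ} (hc0 : 0 ≤ c)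
    (hR : (((c : ℝ) : ℂ) • (1 : Mat n) - ∑ i, X i * (X i)ᴴ).PosSemidef) (k : ℕ) :
    ∑ w : Fin k → Fin d, ∑ a : Fin n, ∑ b : Fin n,
      ‖wordProd X (List.ofFn w) a b‖ ^ 2 ≤ (n : ℝ) * c ^ k := by
  have hpsd := aux_words_psd X hc0 hR k
  set G : Mat n := ∑ w : Fin k → Fin d, wordProd X (List.ofFn w) * (wordProd X (List.ofFn w))ᴴ
    with hG
  have hdiag : ∀ a : Fin n, (G a a).re ≤ c ^ k := by
    intro a
    have h0 := aux_diag_nonneg hpsd a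
    rw [Matrix.sub_apply, Matrix.smul_apply, Matrix.one_apply_eq, smul_eq_mul, mul_one] at h0
    rw [Complex.nonneg_iff] at h0
    have h1 := h0.1
    rw [Complex.sub_re, Complex.ofReal_re, sub_nonneg] at h1
    exact h1
  have hGaa : ∀ a : Fin n, (G a a).re
      = ∑ w : Fin k → Fin d, ∑ b : Fin n, ‖wordProd X (List.ofFn w) a b‖ ^ 2 := by
    intro a
    rw [hG, Matrix.sum_apply]
    rw [Complex.re_sum]
    refine Finset.sum_congr rfl fun w _ => ?_
    rw [Matrix.mul_apply, Complex.re_sum]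
    refine Finset.sum_congr rfl fun b _ => ?_
    rw [Matrix.conjTranspose_apply, Complex.sq_norm]
    rw [Complex.normSq_apply, Complex.mul_re]
    simp [Complex.star_def, Complex.conj_re, Complex.conj_im]
  calc ∑ w : Fin k → Fin d, ∑ a : Fin n, ∑ b : Fin n,
        ‖wordProd X (List.ofFn w) a b‖ ^ 2
      = ∑ a : Fin n, (G a a).re := by
        rw [Finset.sum_comm]
        exact Finset.sum_congr rfl fun a _ => (hGaa a).symm
    _ ≤ ∑ _a : Fin n, c ^ k := Finset.sum_le_sum fun a _ => hdiag a
    _ = (n : ℝ) * c ^ k := by simp [Finset.sum_const, mul_comm]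

end AuxLemmas2

section AuxLemmas3

lemma aux_kron_abs_sum {n : ℕ} (A : Mat n) :
    (∑ p : Fin n × Fin n, ∑ q : Fin n × Fin n, ‖(conjM A ⊗ₖ A) p q‖)
      = (∑ a : Fin n, ∑ b : Fin n, ‖A a b‖) ^ 2 := by
  have hentry : ∀ p q : Fin n × Fin n, ‖(conjM A ⊗ₖ A) p q‖
      = ‖A p.1 q.1‖ * ‖A p.2 q.2‖ := by
    intro p q
    simp [Matrix.kroneckerMap_apply, conjM, Matrix.map_apply]
  simp_rw [hentry]
  rw [Fintype.sum_prod_type]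
  simp_rw [Fintype.sum_prod_type]
  simp_rw [← Finset.sum_mul_sum]
  rw [pow_two]

lemma aux_norm_pow_bound {n d : ℕ} (X : Fin d → Mat n) {c : ℝ} (hc0 : 0 ≤ c)
    (hR : (((c : ℝ) : ℂ) • (1 : Mat n) - ∑ i, X i * (X i)ᴴ).PosSemidef) (k : ℕ) :
    ‖(∑ i, conjM (X i) ⊗ₖ X i) ^ k‖ ≤ ((n : ℝ) ^ 2) * ((n : ℝ) * c ^ k) := by
  rw [aux_pow_expand]
  refine (norm_sum_le _ _).trans ?_
  have step1 : ∀ w : Fin k → Fin d,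
      ‖conjM (wordProd X (List.ofFn w)) ⊗ₖ wordProd X (List.ofFn w)‖
        ≤ ((n:ℝ)^2) * (∑ a : Fin n, ∑ b : Fin n,
            ‖wordProd X (List.ofFn w) a b‖ ^ 2) := by
    intro w
    set A : Mat n := wordProd X (List.ofFn w)
    refine (aux_norm_le_sum _).trans ?_
    rw [aux_kron_abs_sum]
    have hcs : (∑ a : Fin n, ∑ b : Fin n, ‖A a b‖) ^ 2
        ≤ ((n:ℝ)^2) * (∑ a : Fin n, ∑ b : Fin n, ‖A a b‖ ^ 2) := by
      rw [← Finset.sum_product']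
      rw [← Finset.sum_product']
      have := sq_sum_le_card_mul_sum_sq
        (s := (Finset.univ : Finset (Fin n × Fin n)))
        (f := fun ab => ‖A ab.1 ab.2‖)
      simpa [Finset.card_univ, pow_two, mul_comm] using this
    exact hcs
  refine (Finset.sum_le_sum fun w _ => step1 w).trans ?_
  rw [← Finset.mul_sum]
  exact mul_le_mul_of_nonneg_left (aux_trace_bound X hc0 hR k) (by positivity)

end AuxLemmas3

section AuxLemmas4

lemma aux_isUnit {n d : ℕ} (X : Fin d → Mat n) (hX : StrictRowContraction X) :
    IsUnit (1 - ∑ i, conjM (X i) ⊗ₖ X i : Matrix (Fin n × Fin n) (Fin n × Fin n) ℂ) := by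
  set T : Matrix (Fin n × Fin n) (Fin n × Fin n) ℂ := ∑ i, conjM (X i) ⊗ₖ X i with hT
  set c : ℝ := ‖∑ i, X i * (X i)ᴴ‖ with hc
  have hc0 : 0 ≤ c := norm_nonneg _
  have hc1 : c < 1 := hX
  have hpsdR : (∑ i, X i * (X i)ᴴ : Mat n).PosSemidef := by
    refine Finset.sum_induction _ _ (fun A B hA hB => hA.add hB) Matrix.PosSemidef.zero
      (fun i _ => Matrix.posSemidef_self_mul_conjTranspose (X i))
  have hR : (((c : ℝ) : ℂ) • (1 : Mat n) - ∑ i, X i * (X i)ᴴ).PosSemidef :=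
    aux_psd_norm_smul_one_sub hpsdR
  -- choose k with ‖T ^ k‖ < 1
  obtain ⟨k, hk⟩ := exists_pow_lt_of_lt_one
    (show (0:ℝ) < 1 / ((n:ℝ)^2 * n + 1) by positivity) hc1
  have hTk : ‖T ^ k‖ < 1 := by
    refine lt_of_le_of_lt (aux_norm_pow_bound X hc0 hR k) ?_
    have hck : 0 ≤ c ^ k := pow_nonneg hc0 k
    have hpos : (0:ℝ) < (n:ℝ)^2 * n + 1 := by positivity
    rw [div_eq_inv_mul, mul_one] at hk
    calc (n:ℝ)^2 * ((n:ℝ) * c ^ k) = ((n:ℝ)^2 * n) * c ^ k := by ring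
      _ ≤ ((n:ℝ)^2 * n + 1) * c ^ k := by nlinarith
      _ < ((n:ℝ)^2 * n + 1) * (((n:ℝ)^2 * n + 1)⁻¹) := by
          refine mul_lt_mul_of_pos_left hk hpos
      _ = 1 := mul_inv_cancel₀ hpos.ne'
  have hunit : IsUnit (1 - T ^ k) := isUnit_one_sub_of_norm_lt_one hTk
  obtain ⟨u, hu⟩ := hunit
  have hgeom : (∑ i ∈ Finset.range k, T ^ i) * (1 - T) = 1 - T ^ k := by
    have h1 := geom_sum_mul T k
    have h2 : (∑ i ∈ Finset.range k, T ^ i) * (1 - T)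
        = -((∑ i ∈ Finset.range k, T ^ i) * (T - 1)) := by
      rw [← mul_neg, neg_sub]
    rw [h2, h1, neg_sub]
  have hleft : ((↑u⁻¹ : Matrix (Fin n × Fin n) (Fin n × Fin n) ℂ)
      * (∑ i ∈ Finset.range k, T ^ i)) * (1 - T) = 1 := by
    rw [mul_assoc, hgeom, ← hu]
    exact u.inv_mul
  exact (Matrix.isUnit_iff_isUnit_det _).mpr (Matrix.isUnit_det_of_left_inverse hleft)

end AuxLemmas4

section AuxLemmas5

lemma aux_key {n d : ℕ} (X : Fin d → Mat n) (hX : StrictRowContraction X) (c c' : Fin n) :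
    ∑ i : Fin n, ∑ i' : Fin n, pick X (i, c) (i', c')
      * (((1 : Mat n) - ∑ j, X j * (X j)ᴴ) i i') = if c = c' then 1 else 0 := by
  set S : Matrix (Fin n × Fin n) (Fin n × Fin n) ℂ := 1 - ∑ i, conjM (X i) ⊗ₖ X i with hS
  have hU := aux_isUnit X hX
  rw [← hS] at hU
  set D : Mat n := (1 : Mat n) - ∑ j, X j * (X j)ᴴ with hD
  set u : Fin n × Fin n → ℂ := fun p => D p.2 p.1 with hu
  set e : Fin n × Fin n → ℂ := fun p => if p.1 = p.2 then (1:ℂ) else 0 with he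
  have h1 : S *ᵥ e = u := by
    funext p
    obtain ⟨a, b⟩ := p
    have lhs1 : (S *ᵥ e) (a, b) = ∑ i1 : Fin n, ∑ i2 : Fin n, S (a,b) (i1,i2) * e (i1,i2) := by
      rw [Matrix.mulVec, dotProduct, Fintype.sum_prod_type]
    rw [lhs1]
    have hSapp : ∀ i1 i2 : Fin n, S (a,b) (i1,i2)
        = (if a = i1 ∧ b = i2 then (1:ℂ) else 0)
          - ∑ j, (starRingEnd ℂ) (X j a i1) * X j b i2 := by
      intro i1 i2
      rw [hS, Matrix.sub_apply, Matrix.sum_apply, Matrix.one_apply]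
      simp [Prod.ext_iff, Matrix.kroneckerMap_apply, conjM, Matrix.map_apply]
    simp only [hSapp, he]
    rw [Finset.sum_comm]
    simp only [mul_ite, mul_one, mul_zero, Finset.sum_ite_eq, Finset.sum_ite_eq',
      Finset.mem_univ, if_true]
    rw [Finset.sum_sub_distrib, hu]
    simp only [hD, Matrix.sub_apply, Matrix.one_apply, Matrix.sum_apply, Matrix.mul_apply,
      Matrix.conjTranspose_apply]
    congr 1
    · simp [ite_and, Finset.sum_ite_eq]
    · rw [Finset.sum_comm]
      refine Finset.sum_congr rfl fun j _ => Finset.sum_congr rfl fun x _ => ?_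
      rw [mul_comm]
      rfl
  have h2 : S⁻¹ *ᵥ u = e := by
    rw [← h1, Matrix.mulVec_mulVec,
      Matrix.nonsing_inv_mul S ((Matrix.isUnit_iff_isUnit_det S).mp hU), Matrix.one_mulVec]
  have hpick : ∀ (i : Fin n) (i' : Fin n), pick X (i, c) (i', c') = S⁻¹ (c', c) (i', i) := by
    intro i i'
    rfl
  have hfin : ∑ i : Fin n, ∑ i' : Fin n, pick X (i, c) (i', c') * (D i i')
      = (S⁻¹ *ᵥ u) (c', c) := by
    rw [Matrix.mulVec, dotProduct, Fintype.sum_prod_type, Finset.sum_comm]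
    refine Finset.sum_congr rfl fun i _ => Finset.sum_congr rfl fun i' _ => ?_
    rw [hpick, hu]
  rw [hfin, h2, he]
  simp [eq_comm]

end AuxLemmas5

section AuxLemmas6

lemma aux_sqrt_herm {m : Type*} [Fintype m] [DecidableEq m] {A : Matrix m m ℂ}
    (hA : A.PosSemidef) : (hA.sqrt)ᴴ = hA.sqrt := by
  unfold Matrix.PosSemidef.sqrt
  rw [Matrix.conjTranspose_mul, Matrix.conjTranspose_mul, Matrix.diagonal_conjTranspose]
  simp only [Matrix.star_eq_conjTranspose, Matrix.conjTranspose_conjTranspose, Matrix.mul_assoc]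
  congr 3
  funext i
  simp [Complex.conj_ofReal]

lemma aux_sqrt_mul_self {m : Type*} [Fintype m] [DecidableEq m] {A : Matrix m m ℂ}
    (hA : A.PosSemidef) : hA.sqrt * hA.sqrt = A := by
  unfold Matrix.PosSemidef.sqrt
  have hU : (star hA.1.eigenvectorUnitary : Matrix m m ℂ) * hA.1.eigenvectorUnitary.1 = 1 :=
    Unitary.coe_star_mul_self _
  have hD : diagonal (((↑) : ℝ → ℂ) ∘ (√·) ∘ hA.1.eigenvalues)
      * diagonal (((↑) : ℝ → ℂ) ∘ (√·) ∘ hA.1.eigenvalues)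
      = diagonal (RCLike.ofReal ∘ hA.1.eigenvalues) := by
    rw [Matrix.diagonal_mul_diagonal]
    congr 1
    funext i
    simp only [Function.comp_apply]
    rw [← Complex.ofReal_mul, Real.mul_self_sqrt (hA.eigenvalues_nonneg i)]
    rfl
  conv_rhs => rw [hA.1.spectral_theorem, Unitary.conjStarAlgAut_apply]
  rw [← hD]
  simp only [Matrix.mul_assoc]
  rw [← Matrix.mul_assoc (star hA.1.eigenvectorUnitary : Matrix m m ℂ), hU, Matrix.one_mul]
  rfl

lemma aux_boomAmp_apply (n r : ℕ) (p : Fin n × Fin n × Fin r × Fin n) (q : Fin n × Fin r) :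
    boomAmp n r p q = if p.2.2.2 = p.1 ∧ p.2.1 = q.1 ∧ p.2.2.1 = q.2 then 1 else 0 := by
  unfold boomAmp preBoom commMat
  rw [Matrix.mul_apply, Fintype.sum_prod_type]
  simp only [Matrix.of_apply, ite_and]
  by_cases h1 : p.2.2.2 = p.1 <;>
    by_cases h2 : p.2.1 = q.1 <;>
      by_cases h3 : p.2.2.1 = q.2 <;>
        simp [h1, h2, h3, Finset.sum_ite_eq, Finset.sum_ite_eq', eq_comm] <;>
          (try split_ifs with hh) <;> simp_all [eq_comm]

lemma aux_krT_conjTranspose {n : ℕ} (A : Matrix (Fin n × Fin n) (Fin n × Fin n) ℂ)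
    (C D : Mat n) : (krT (krA A C) D)ᴴ = krT (krA Aᴴ Cᴴ) Dᴴ := by
  ext p q
  simp only [Matrix.conjTranspose_apply, krT, krA, Matrix.of_apply, star_mul']

def quadEquiv {α β γ δ : Type*} : (α × β × γ × δ) ≃ ((α × β) × γ) × δ where
  toFun p := (((p.1, p.2.1), p.2.2.1), p.2.2.2)
  invFun x := (x.1.1.1, x.1.1.2, x.1.2, x.2)
  left_inv p := rfl
  right_inv x := rfl

lemma aux_krT_eq {n : ℕ} (A : Matrix (Fin n × Fin n) (Fin n × Fin n) ℂ) (C D : Mat n) :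
    krT (krA A C) D = ((A ⊗ₖ C) ⊗ₖ D).submatrix quadEquiv quadEquiv := by
  ext p q
  rfl

lemma aux_krT_mul {n : ℕ} (A A' : Matrix (Fin n × Fin n) (Fin n × Fin n) ℂ)
    (C C' D D' : Mat n) :
    krT (krA A C) D * krT (krA A' C') D' = krT (krA (A * A') (C * C')) (D * D') := by
  rw [aux_krT_eq, aux_krT_eq, aux_krT_eq, Matrix.submatrix_mul_equiv,
    ← Matrix.mul_kronecker_mul, ← Matrix.mul_kronecker_mul]

end AuxLemmas6

/-- For a strict row contraction `X`, with `Δ_X = I_n − Σᵢ Xᵢ Xᵢ*` and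
`𝒱_X = (P_X^{1/2} ⊗ I_n ⊗ Δ_X^{1/2})·B̆_n`, the matrix `𝒱_X` is an isometry:
`𝒱_X*·𝒱_X = I_{n²}`.  (`hP.sqrt`, `hΔ.sqrt` are the positive semidefinite square roots.) -/
theorem miniDilation_isometry {n d : ℕ} (X : Fin d → Mat n)
    (hX : StrictRowContraction X)
    (hP : (pick X).PosSemidef)
    (hΔ : ((1 : Mat n) - ∑ i, X i * (X i)ᴴ).PosSemidef) :
    (krT (krA hP.sqrt (1 : Mat n)) hΔ.sqrt * boomAmp n n)ᴴ *
        (krT (krA hP.sqrt (1 : Mat n)) hΔ.sqrt * boomAmp n n) =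
      (1 : Matrix (Fin n × Fin n) (Fin n × Fin n) ℂ) := by
  rw [Matrix.conjTranspose_mul, aux_krT_conjTranspose, Matrix.conjTranspose_one,
    aux_sqrt_herm hP, aux_sqrt_herm hΔ, Matrix.mul_assoc,
    ← Matrix.mul_assoc (krT (krA hP.sqrt (1 : Mat n)) hΔ.sqrt)
      (krT (krA hP.sqrt (1 : Mat n)) hΔ.sqrt) (boomAmp n n),
    aux_krT_mul, Matrix.one_mul, aux_sqrt_mul_self hP, aux_sqrt_mul_self hΔ]
  ext ⟨c, m⟩ ⟨c', m'⟩
  simp only [Matrix.mul_apply, Matrix.conjTranspose_apply, aux_boomAmp_apply, krT, krA,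
    Matrix.of_apply, apply_ite (star : ℂ → ℂ), star_one, star_zero]
  rw [Fintype.sum_prod_type]
  simp_rw [Fintype.sum_prod_type]
  simp only [ite_and, ite_mul, mul_ite, zero_mul, mul_zero, one_mul, mul_one,
    Finset.sum_ite_eq, Finset.sum_ite_eq', Finset.mem_univ, if_true,
    Finset.sum_ite_irrel, Finset.sum_const_zero]
  show (∑ x : Fin n, ∑ x1 : Fin n, pick X (x, c) (x1, c') * (1 : Mat n) m m'
      * ((1 - ∑ i : Fin d, X i * (X i)ᴴ) x x1)) = (1 : Matrix (Fin n × Fin n) (Fin n × Fin n) ℂ) (c, m) (c', m')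
  have hre : ∀ (i i' : Fin n), pick X (i, c) (i', c') * (1 : Mat n) m m'
        * ((1 - ∑ j : Fin d, X j * (X j)ᴴ) i i')
      = (1 : Mat n) m m' * (pick X (i, c) (i', c')
          * (((1 : Mat n) - ∑ j : Fin d, X j * (X j)ᴴ) i i')) := by
    intro i i'
    ring
  simp_rw [hre, ← Finset.mul_sum]
  rw [aux_key X hX c c']
  by_cases hc : c = c' <;> by_cases hm : m = m' <;>
    simp [hc, hm, Matrix.one_apply, Prod.ext_iff]
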